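/- Under the hypotheses of the affine block-matrix lemma, lim_{μ→∞} M(μ)⁻¹ · [[0,0],[0, μE]] = [[0, −A⁻¹B],[0, I]]. -/

import Mathlib

open Matrix Filter Topology

theorem block_matrix_asymptotic_inverse_mul (n m : ℕ)
    (A : Matrix (Fin n) (Fin n) ℂ) (B : Matrix (Fin n) (Fin m) ℂ)
    (D E : Matrix (Fin m) (Fin m) ℂ)
    (hA : IsUnit A.det) (hE : IsUnit E.det)
    (M : ℝ → Matrix (Fin n ⊕ Fin m) (Fin n ⊕ Fin m) ℂ)
    (hM : ∀ μ : ℝ, M μ = Matrix.fromBlocks A B Bᵀ (D + (μ : ℂ) • E))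
    (hMinv : ∀ᶠ μ : ℝ in atTop, IsUnit (M μ).det) :
    ∀ i j, Tendsto
      (fun μ : ℝ =>
        ((M μ)⁻¹ * (Matrix.fromBlocks 0 0 0 ((μ : ℂ) • E) :
          Matrix (Fin n ⊕ Fin m) (Fin n ⊕ Fin m) ℂ)) i j) atTop
      (𝓝 ((Matrix.fromBlocks 0 (-(A⁻¹ * B)) 0 1 :
          Matrix (Fin n ⊕ Fin m) (Fin n ⊕ Fin m) ℂ) i j)) := by
  classical
  haveI : Invertible A := A.invertibleOfIsUnitDet hA
  set C : Matrix (Fin m) (Fin m) ℂ := D - Bᵀ * A⁻¹ * B with hC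
  -- the rescaled Schur complement tends to E
  have hXlim : Tendsto (fun μ : ℝ => (μ : ℂ)⁻¹ • C + E) atTop (𝓝 E) := by
    have h0 : Tendsto (fun μ : ℝ => (μ : ℂ)⁻¹) atTop (𝓝 0) := by
      have h1 : Tendsto (fun μ : ℝ => μ⁻¹) atTop (𝓝 (0 : ℝ)) := tendsto_inv_atTop_zero
      have h2 := (Complex.continuous_ofReal.tendsto 0).comp h1
      simpa [Function.comp_def, Complex.ofReal_inv] using h2
    have := (h0.smul_const C).add (tendsto_const_nhds : Tendsto (fun _ : ℝ => E) atTop (𝓝 E))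
    simpa using this
  -- continuity of Y ↦ Y⁻¹ * E at E
  have hdetE : E.det ≠ 0 := hE.ne_zero
  have hcontinv : ContinuousAt Inv.inv E := by
    refine continuousAt_matrix_inv E ?_
    rw [Ring.inverse_eq_inv']
    exact continuousAt_inv₀ hdetE
  have hcont : ContinuousAt (fun Y : Matrix (Fin m) (Fin m) ℂ => Y⁻¹ * E) E :=
    ((continuous_id.matrix_mul continuous_const).continuousAt).comp hcontinv
  have hTlim : Tendsto (fun μ : ℝ => ((μ : ℂ)⁻¹ • C + E)⁻¹ * E) atTop (𝓝 1) := by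
    have := hcont.tendsto.comp hXlim
    simpa [Function.comp_def, Matrix.nonsing_inv_mul E hE] using this
  -- the main matrix-level limit
  have hmain : Tendsto
      (fun μ : ℝ => ((M μ)⁻¹ * (Matrix.fromBlocks 0 0 0 ((μ : ℂ) • E) :
        Matrix (Fin n ⊕ Fin m) (Fin n ⊕ Fin m) ℂ)))
      atTop (𝓝 (Matrix.fromBlocks 0 (-(A⁻¹ * B)) 0 1)) := by
    have hlim2 : Tendsto
        (fun μ : ℝ => (Matrix.fromBlocks 0 (-(A⁻¹ * B) * (((μ : ℂ)⁻¹ • C + E)⁻¹ * E)) 0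
          (((μ : ℂ)⁻¹ • C + E)⁻¹ * E) : Matrix (Fin n ⊕ Fin m) (Fin n ⊕ Fin m) ℂ))
        atTop (𝓝 (Matrix.fromBlocks 0 (-(A⁻¹ * B)) 0 1)) := by
      have hcont2 : Continuous (fun Y : Matrix (Fin m) (Fin m) ℂ =>
          (Matrix.fromBlocks 0 (-(A⁻¹ * B) * Y) 0 Y :
            Matrix (Fin n ⊕ Fin m) (Fin n ⊕ Fin m) ℂ)) := by
        apply continuous_matrix
        rintro (i | i) (j | j) <;>
          simp only [Matrix.fromBlocks_apply₁₁, Matrix.fromBlocks_apply₁₂,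
            Matrix.fromBlocks_apply₂₁, Matrix.fromBlocks_apply₂₂] <;>
          first
            | exact continuous_const
            | exact (continuous_const.matrix_mul continuous_id).matrix_elem _ _
            | exact continuous_id.matrix_elem _ _
      have := (hcont2.continuousAt.tendsto).comp hTlim
      simpa [Function.comp_def] using this
    refine hlim2.congr' ?_
    filter_upwards [hMinv, eventually_gt_atTop (0 : ℝ)] with μ hdet hμ
    have hμ0 : (μ : ℂ) ≠ 0 := by exact_mod_cast ne_of_gt hμ
    -- Schur complement
    set S : Matrix (Fin m) (Fin m) ℂ := D + (μ : ℂ) • E - Bᵀ * ⅟A * B with hS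
    have hSC : S = C + (μ : ℂ) • E := by
      rw [hS, hC, invOf_eq_nonsing_inv]
      abel
    have hdet' : IsUnit ((Matrix.fromBlocks A B Bᵀ (D + (μ : ℂ) • E) :
        Matrix (Fin n ⊕ Fin m) (Fin n ⊕ Fin m) ℂ)).det := by rwa [hM μ] at hdet
    have hdetS : IsUnit S.det := by
      rw [Matrix.det_fromBlocks₁₁] at hdet'
      exact isUnit_of_mul_isUnit_right hdet'
    haveI : Invertible S := S.invertibleOfIsUnitDet hdetS
    haveI : Invertible (Matrix.fromBlocks A B Bᵀ (D + (μ : ℂ) • E) :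
        Matrix (Fin n ⊕ Fin m) (Fin n ⊕ Fin m) ℂ) :=
      Matrix.invertibleOfIsUnitDet _ hdet'
    have hinv : (M μ)⁻¹ = Matrix.fromBlocks (⅟A + ⅟A * B * ⅟S * Bᵀ * ⅟A)
        (-(⅟A * B * ⅟S)) (-(⅟S * Bᵀ * ⅟A)) (⅟S) := by
      rw [hM μ, ← invOf_eq_nonsing_inv, Matrix.invOf_fromBlocks₁₁_eq]
    -- rewrite ⅟S * (μ • E)
    have hX0 : (μ : ℂ)⁻¹ • S = (μ : ℂ)⁻¹ • C + E := by
      rw [hSC, smul_add, smul_smul, inv_mul_cancel₀ hμ0, one_smul]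
    have hSmul : S⁻¹ * ((μ : ℂ) • E)
        = ((μ : ℂ)⁻¹ • C + E)⁻¹ * E := by
      rw [← hX0]
      have : ((μ : ℂ)⁻¹ • S)⁻¹ = (μ : ℂ) • S⁻¹ := by
        apply Matrix.inv_eq_right_inv
        rw [Matrix.smul_mul, Matrix.mul_smul, smul_smul, inv_mul_cancel₀ hμ0, one_smul,
          Matrix.mul_nonsing_inv S hdetS]
      rw [this, Matrix.smul_mul, Matrix.mul_smul]
    rw [hinv, Matrix.fromBlocks_multiply]
    simp only [Matrix.mul_zero, Matrix.zero_mul, add_zero, zero_add, Matrix.neg_mul,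
      Matrix.mul_assoc, invOf_eq_nonsing_inv, hSmul]
  intro i j
  exact (((continuous_apply j).comp (continuous_apply i)).continuousAt.tendsto).comp hmain
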